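/- For every pair of adjacent vertices i, j of a finite connected simple graph in which every vertex has degree at least 1, the Ollivier–Ricci curvature satisfies κ(i,j) ≥ −2·(1 − 1/d_i − 1/d_j)₊, where s₊ = max(s, 0). -/
import Mathlib


open Finset

/-- The probability measure at node `i`: uniform on the neighbors of `i`. -/
noncomputable def massDist {V : Type*} [Fintype V] (G : SimpleGraph V)
    [DecidableRel G.Adj] (i u : V) : ℝ :=
  if G.Adj i u then 1 / (G.degree i : ℝ) else 0

/-- `Γ` is a coupling of the measures `massDist G i` and `massDist G j`. -/
def IsCoupling {V : Type*} [Fintype V] (G : SimpleGraph V) [DecidableRel G.Adj]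
    (i j : V) (Γ : V → V → ℝ) : Prop :=
  (∀ u v, 0 ≤ Γ u v) ∧
  (∀ u, ∑ v, Γ u v = massDist G i u) ∧
  (∀ v, ∑ u, Γ u v = massDist G j v)

/-- The L¹-Wasserstein distance between the neighborhood measures of `i` and `j`,
with respect to the shortest-path distance. -/
noncomputable def wassersteinW1 {V : Type*} [Fintype V] (G : SimpleGraph V)
    [DecidableRel G.Adj] (i j : V) : ℝ :=
  sInf { c : ℝ | ∃ Γ : V → V → ℝ, IsCoupling G i j Γ ∧
    c = ∑ u, ∑ v, Γ u v * (G.dist u v : ℝ) }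

/-- The Ollivier–Ricci curvature of the edge `{i, j}` (for adjacent `i`, `j`,
so that `d(i,j) = 1`). -/
noncomputable def ollivierRicci {V : Type*} [Fintype V] (G : SimpleGraph V)
    [DecidableRel G.Adj] (i j : V) : ℝ :=
  1 - wassersteinW1 G i j

/-- Jost–Liu lower bound for the Ollivier–Ricci curvature. -/
theorem ollivierRicci_jost_liu_lower_bound
    {V : Type*} [Fintype V] [DecidableEq V] (G : SimpleGraph V) [DecidableRel G.Adj]
    (hconn : G.Connected) (hdeg : ∀ v : V, 1 ≤ G.degree v)
    (i j : V) (hij : G.Adj i j) :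
    ollivierRicci G i j ≥
      -2 * max (1 - 1 / (G.degree i : ℝ) - 1 / (G.degree j : ℝ)) 0 := by
  classical
  have hji : G.Adj j i := hij.symm
  set di := G.degree i with hdi_def
  set dj := G.degree j with hdj_def
  have hdi1 : 1 ≤ di := hdeg i
  have hdj1 : 1 ≤ dj := hdeg j
  have hdi0 : (0:ℝ) < (di:ℝ) := by exact_mod_cast hdi1
  have hdj0 : (0:ℝ) < (dj:ℝ) := by exact_mod_cast hdj1
  have hdi1' : (1:ℝ) ≤ (di:ℝ) := by exact_mod_cast hdi1
  have hdj1' : (1:ℝ) ≤ (dj:ℝ) := by exact_mod_cast hdj1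
  set a : ℝ := 1 / (di:ℝ) with ha_def
  set b : ℝ := 1 / (dj:ℝ) with hb_def
  have ha0 : 0 < a := by positivity
  have hb0 : 0 < b := by positivity
  have ha1 : a ≤ 1 := by rw [ha_def, div_le_one hdi0]; exact hdi1'
  have hb1 : b ≤ 1 := by rw [hb_def, div_le_one hdj0]; exact hdj1'
  set x : ℝ := max (a + b - 1) 0 with hx_def
  set t : ℝ := max (1 - a - b) 0 with ht_def
  have hx0 : 0 ≤ x := le_max_right _ _
  have ht0 : 0 ≤ t := le_max_right _ _
  have hxa : x ≤ a := max_le (by linarith) ha0.le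
  have hxb : x ≤ b := max_le (by linarith) hb0.le
  have hxt : x - t = a + b - 1 := by
    rcases le_total (a + b) 1 with h | h
    · rw [hx_def, ht_def, max_eq_right (by linarith), max_eq_left (by linarith)]; ring
    · rw [hx_def, ht_def, max_eq_left (by linarith), max_eq_right (by linarith)]; ring
  set c1 : ℝ := (a - x) * b / (1 - b) with hc1_def
  set c2 : ℝ := (b - x) * a / (1 - a) with hc2_def
  set c3 : ℝ := t * (a * b) / ((1 - a) * (1 - b)) with hc3_def
  have hc1nn : 0 ≤ c1 := div_nonneg (mul_nonneg (by linarith) hb0.le) (by linarith)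
  have hc2nn : 0 ≤ c2 := div_nonneg (mul_nonneg (by linarith) ha0.le) (by linarith)
  have hc3nn : 0 ≤ c3 :=
    div_nonneg (mul_nonneg ht0 (mul_nonneg ha0.le hb0.le))
      (mul_nonneg (by linarith) (by linarith))
  have hdia : ((di:ℝ) - 1) * a = 1 - a := by
    rw [ha_def]; field_simp
  have hdjb : ((dj:ℝ) - 1) * b = 1 - b := by
    rw [hb_def]; field_simp
  -- key identities
  have L1 : ((dj:ℝ) - 1) * c1 = a - x := by
    by_cases h : (dj:ℝ) = 1
    · have hb' : b = 1 := by rw [hb_def, h, div_one]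
      have hx' : x = a := by rw [hx_def, hb']; rw [show a + 1 - 1 = a by ring]; exact max_eq_left ha0.le
      rw [h, hx']; ring
    · have hb' : (1:ℝ) - b ≠ 0 := by
        have : 1 < (dj:ℝ) := lt_of_le_of_ne hdj1' (Ne.symm h)
        have : b < 1 := by rw [hb_def]; rw [div_lt_one hdj0]; exact this
        linarith
      calc ((dj:ℝ) - 1) * c1 = (a - x) * (((dj:ℝ) - 1) * b) / (1 - b) := by
              rw [hc1_def]; ring
        _ = a - x := by rw [hdjb, mul_div_assoc, div_self hb', mul_one]
  have L2 : ((di:ℝ) - 1) * c2 = b - x := by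
    by_cases h : (di:ℝ) = 1
    · have ha' : a = 1 := by rw [ha_def, h, div_one]
      have hx' : x = b := by rw [hx_def, ha']; rw [show 1 + b - 1 = b by ring]; exact max_eq_left hb0.le
      rw [h, hx']; ring
    · have ha' : (1:ℝ) - a ≠ 0 := by
        have : 1 < (di:ℝ) := lt_of_le_of_ne hdi1' (Ne.symm h)
        have : a < 1 := by rw [ha_def]; rw [div_lt_one hdi0]; exact this
        linarith
      calc ((di:ℝ) - 1) * c2 = (b - x) * (((di:ℝ) - 1) * a) / (1 - a) := by
              rw [hc2_def]; ring
        _ = b - x := by rw [hdia, mul_div_assoc, div_self ha', mul_one]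
  have L3 : ((di:ℝ) - 1) * ((dj:ℝ) - 1) * c3 = t := by
    by_cases h : (di:ℝ) = 1
    · have ha' : a = 1 := by rw [ha_def, h, div_one]
      have ht' : t = 0 := by rw [ht_def, ha']; apply max_eq_right; linarith
      rw [h, ht']; ring
    by_cases h' : (dj:ℝ) = 1
    · have hb' : b = 1 := by rw [hb_def, h', div_one]
      have ht' : t = 0 := by rw [ht_def, hb']; apply max_eq_right; linarith
      rw [h', ht']; ring
    · have ha' : (1:ℝ) - a ≠ 0 := by
        have h1 : 1 < (di:ℝ) := lt_of_le_of_ne hdi1' (Ne.symm h)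
        have : a < 1 := by rw [ha_def]; rw [div_lt_one hdi0]; exact h1
        linarith
      have hb' : (1:ℝ) - b ≠ 0 := by
        have h1 : 1 < (dj:ℝ) := lt_of_le_of_ne hdj1' (Ne.symm h')
        have : b < 1 := by rw [hb_def]; rw [div_lt_one hdj0]; exact h1
        linarith
      calc ((di:ℝ) - 1) * ((dj:ℝ) - 1) * c3
          = t * ((((di:ℝ) - 1) * a) * (((dj:ℝ) - 1) * b)) / ((1 - a) * (1 - b)) := by
            rw [hc3_def]; ring
        _ = t := by
            rw [hdia, hdjb, mul_div_assoc, div_self (mul_ne_zero ha' hb'), mul_one]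
  -- cardinalities
  have hsubi : {i} ⊆ G.neighborFinset j := by
    simp [Finset.singleton_subset_iff, SimpleGraph.mem_neighborFinset, hji]
  have hsubj : {j} ⊆ G.neighborFinset i := by
    simp [Finset.singleton_subset_iff, SimpleGraph.mem_neighborFinset, hij]
  have hcardB : ((Finset.univ.filter fun v => v ≠ i ∧ G.Adj j v).card : ℝ) = (dj:ℝ) - 1 := by
    have he : (Finset.univ.filter fun v => v ≠ i ∧ G.Adj j v) = G.neighborFinset j \ {i} := by
      ext v
      simp [SimpleGraph.mem_neighborFinset, and_comm]
    rw [he, Finset.card_sdiff_of_subset hsubi, Finset.card_singleton,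
      SimpleGraph.card_neighborFinset_eq_degree, ← hdj_def, Nat.cast_sub hdj1, Nat.cast_one]
  have hcardA : ((Finset.univ.filter fun u => u ≠ j ∧ G.Adj i u).card : ℝ) = (di:ℝ) - 1 := by
    have he : (Finset.univ.filter fun u => u ≠ j ∧ G.Adj i u) = G.neighborFinset i \ {j} := by
      ext u
      simp [SimpleGraph.mem_neighborFinset, and_comm]
    rw [he, Finset.card_sdiff_of_subset hsubj, Finset.card_singleton,
      SimpleGraph.card_neighborFinset_eq_degree, ← hdi_def, Nat.cast_sub hdi1, Nat.cast_one]
  have hsumB : ∀ c : ℝ, (∑ v, if v ≠ i ∧ G.Adj j v then c else 0) = ((dj:ℝ) - 1) * c := by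
    intro c
    rw [Finset.sum_ite, Finset.sum_const, Finset.sum_const_zero, add_zero, nsmul_eq_mul, hcardB]
  have hsumA : ∀ c : ℝ, (∑ u, if u ≠ j ∧ G.Adj i u then c else 0) = ((di:ℝ) - 1) * c := by
    intro c
    rw [Finset.sum_ite, Finset.sum_const, Finset.sum_const_zero, add_zero, nsmul_eq_mul, hcardA]
  have hsumI : ∀ c : ℝ, (∑ v : V, if v = i then c else 0) = c := by
    intro c; simp
  have hsumJ : ∀ c : ℝ, (∑ u : V, if u = j then c else 0) = c := by
    intro c; simp
  -- the coupling
  set Γ : V → V → ℝ := fun u v =>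
    (if u = j ∧ v = i then x else 0) +
    ((if u = j ∧ (v ≠ i ∧ G.Adj j v) then c1 else 0) +
    ((if (u ≠ j ∧ G.Adj i u) ∧ v = i then c2 else 0) +
    (if (u ≠ j ∧ G.Adj i u) ∧ (v ≠ i ∧ G.Adj j v) then c3 else 0))) with hG_def
  have hnn : ∀ u v, 0 ≤ Γ u v := by
    intro u v
    rw [hG_def]
    dsimp only
    apply add_nonneg
    · split_ifs <;> simp [hx0]
    apply add_nonneg
    · split_ifs <;> simp [hc1nn]
    apply add_nonneg
    · split_ifs <;> simp [hc2nn]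
    · split_ifs <;> simp [hc3nn]
  have hdi2 : ∀ u : V, u ≠ j → G.Adj i u → (1:ℝ) < (di:ℝ) := by
    intro u hu hadj
    have h2 : 1 < (G.neighborFinset i).card :=
      Finset.one_lt_card.mpr ⟨j, by simp [SimpleGraph.mem_neighborFinset, hij],
        u, by simp [SimpleGraph.mem_neighborFinset, hadj], fun h => hu h.symm⟩
    have : 1 < di := by rwa [hdi_def, ← SimpleGraph.card_neighborFinset_eq_degree]
    exact_mod_cast this
  have hdj2 : ∀ v : V, v ≠ i → G.Adj j v → (1:ℝ) < (dj:ℝ) := by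
    intro v hv hadj
    have h2 : 1 < (G.neighborFinset j).card :=
      Finset.one_lt_card.mpr ⟨i, by simp [SimpleGraph.mem_neighborFinset, hji],
        v, by simp [SimpleGraph.mem_neighborFinset, hadj], fun h => hv h.symm⟩
    have : 1 < dj := by rwa [hdj_def, ← SimpleGraph.card_neighborFinset_eq_degree]
    exact_mod_cast this
  have L4 : ∀ u : V, u ≠ j → G.Adj i u → c2 + ((dj:ℝ) - 1) * c3 = a := by
    intro u hu hadj
    have h1 : (di:ℝ) - 1 ≠ 0 := by have := hdi2 u hu hadj; linarith
    apply mul_left_cancel₀ h1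
    have : ((di:ℝ) - 1) * (c2 + ((dj:ℝ) - 1) * c3)
        = ((di:ℝ) - 1) * c2 + ((di:ℝ) - 1) * ((dj:ℝ) - 1) * c3 := by ring
    rw [this, L2, L3, hdia]
    linarith [hxt]
  have L5 : ∀ v : V, v ≠ i → G.Adj j v → c1 + ((di:ℝ) - 1) * c3 = b := by
    intro v hv hadj
    have h1 : (dj:ℝ) - 1 ≠ 0 := by have := hdj2 v hv hadj; linarith
    apply mul_left_cancel₀ h1
    have : ((dj:ℝ) - 1) * (c1 + ((di:ℝ) - 1) * c3)
        = ((dj:ℝ) - 1) * c1 + ((di:ℝ) - 1) * ((dj:ℝ) - 1) * c3 := by ring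
    rw [this, L1, L3, hdjb]
    linarith [hxt]
  -- row sums
  have hrow : ∀ u, ∑ v, Γ u v = massDist G i u := by
    intro u
    by_cases hu : u = j
    · have hΓv : ∀ v, Γ u v = (if v = i then x else 0) + (if v ≠ i ∧ G.Adj j v then c1 else 0) := by
        intro v; rw [hG_def]; simp [hu]
      rw [Finset.sum_congr rfl fun v _ => hΓv v, Finset.sum_add_distrib, hsumI, hsumB, hu]
      have : massDist G i j = a := by simp [massDist, hij, ← hdi_def, ← ha_def]
      rw [this]; linarith [L1]
    · by_cases hadj : G.Adj i u
      · have hΓv : ∀ v, Γ u v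
            = (if v = i then c2 else 0) + (if v ≠ i ∧ G.Adj j v then c3 else 0) := by
          intro v; rw [hG_def]; simp [hu, hadj]
        rw [Finset.sum_congr rfl fun v _ => hΓv v, Finset.sum_add_distrib, hsumI, hsumB]
        have : massDist G i u = a := by simp [massDist, hadj, ← hdi_def, ← ha_def]
        rw [this]
        exact L4 u hu hadj
      · have hΓv : ∀ v, Γ u v = 0 := by
          intro v; rw [hG_def]; simp [hu, hadj]
        rw [Finset.sum_congr rfl fun v _ => hΓv v]
        simp [massDist, hadj]
  -- column sums
  have hcol : ∀ v, ∑ u, Γ u v = massDist G j v := by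
    intro v
    by_cases hv : v = i
    · have hΓu : ∀ u, Γ u v = (if u = j then x else 0) + (if u ≠ j ∧ G.Adj i u then c2 else 0) := by
        intro u; rw [hG_def]; by_cases hu : u = j <;> simp [hu, hv, hij]
      rw [Finset.sum_congr rfl fun u _ => hΓu u, Finset.sum_add_distrib, hsumJ, hsumA, hv]
      have : massDist G j i = b := by simp [massDist, hji, ← hdj_def, ← hb_def]
      rw [this]; linarith [L2]
    · by_cases hadj : G.Adj j v
      · have hΓu : ∀ u, Γ u v
            = (if u = j then c1 else 0) + (if u ≠ j ∧ G.Adj i u then c3 else 0) := by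
          intro u; rw [hG_def]; by_cases hu : u = j <;> simp [hu, hv, hadj]
        rw [Finset.sum_congr rfl fun u _ => hΓu u, Finset.sum_add_distrib, hsumJ, hsumA]
        have : massDist G j v = b := by simp [massDist, hadj, ← hdj_def, ← hb_def]
        rw [this]
        exact L5 v hv hadj
      · have hΓu : ∀ u, Γ u v = 0 := by
          intro u; rw [hG_def]; by_cases hu : u = j <;> simp [hu, hv, hadj]
        rw [Finset.sum_congr rfl fun u _ => hΓu u]
        simp [massDist, hadj]
  -- cost bound
  have hdist1 : ∀ u v : V, G.Adj u v → (G.dist u v : ℝ) ≤ 1 := by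
    intro u v h
    rw [SimpleGraph.dist_eq_one_iff_adj.mpr h]; norm_num
  have hpt : ∀ u v, Γ u v * (G.dist u v : ℝ) ≤
      (if u = j ∧ v = i then x else 0) +
      ((if u = j ∧ (v ≠ i ∧ G.Adj j v) then c1 else 0) +
      ((if (u ≠ j ∧ G.Adj i u) ∧ v = i then c2 else 0) +
      (if (u ≠ j ∧ G.Adj i u) ∧ (v ≠ i ∧ G.Adj j v) then c3 * 3 else 0))) := by
    intro u v
    have hd0 : (0:ℝ) ≤ (G.dist u v : ℝ) := Nat.cast_nonneg _
    rw [hG_def]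
    dsimp only
    rw [add_mul, add_mul, add_mul]
    apply add_le_add
    · split_ifs with h
      · obtain ⟨h1, h2⟩ := h; subst h1; subst h2
        exact mul_le_of_le_one_right hx0 (hdist1 _ _ hji)
      · simp
    apply add_le_add
    · split_ifs with h
      · obtain ⟨h1, h2⟩ := h; subst h1
        exact mul_le_of_le_one_right hc1nn (hdist1 _ _ h2.2)
      · simp
    apply add_le_add
    · split_ifs with h
      · obtain ⟨h1, h2⟩ := h; subst h2
        exact mul_le_of_le_one_right hc2nn (hdist1 _ _ h1.2.symm)
      · simp
    · split_ifs with h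
      · obtain ⟨⟨hu, hui⟩, hv, hjv⟩ := h
        have hd3 : (G.dist u v : ℝ) ≤ 3 := by
          have t1 : G.dist u v ≤ G.dist u i + G.dist i v := hconn.dist_triangle
          have t2 : G.dist i v ≤ G.dist i j + G.dist j v := hconn.dist_triangle
          have e1 : G.dist u i = 1 := SimpleGraph.dist_eq_one_iff_adj.mpr hui.symm
          have e2 : G.dist i j = 1 := SimpleGraph.dist_eq_one_iff_adj.mpr hij
          have e3 : G.dist j v = 1 := SimpleGraph.dist_eq_one_iff_adj.mpr hjv
          have : G.dist u v ≤ 3 := by omega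
          exact_mod_cast this
        calc c3 * (G.dist u v : ℝ) ≤ c3 * 3 := by
              exact mul_le_mul_of_nonneg_left hd3 hc3nn
          _ = c3 * 3 := rfl
      · simp
  have hcost : (∑ u, ∑ v, Γ u v * (G.dist u v : ℝ)) ≤ 1 + 2 * t := by
    have step1 : (∑ u, ∑ v, Γ u v * (G.dist u v : ℝ)) ≤
        ∑ u : V, ∑ v : V,
          ((if u = j ∧ v = i then x else 0) +
          ((if u = j ∧ (v ≠ i ∧ G.Adj j v) then c1 else 0) +
          ((if (u ≠ j ∧ G.Adj i u) ∧ v = i then c2 else 0) +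
          (if (u ≠ j ∧ G.Adj i u) ∧ (v ≠ i ∧ G.Adj j v) then c3 * 3 else 0)))) :=
      Finset.sum_le_sum fun u _ => Finset.sum_le_sum fun v _ => hpt u v
    refine le_trans step1 (le_of_eq ?_)
    have hinner : ∀ u : V, (∑ v : V,
          ((if u = j ∧ v = i then x else 0) +
          ((if u = j ∧ (v ≠ i ∧ G.Adj j v) then c1 else 0) +
          ((if (u ≠ j ∧ G.Adj i u) ∧ v = i then c2 else 0) +
          (if (u ≠ j ∧ G.Adj i u) ∧ (v ≠ i ∧ G.Adj j v) then c3 * 3 else 0)))))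
        = (if u = j then x + ((dj:ℝ) - 1) * c1 else 0) +
          (if u ≠ j ∧ G.Adj i u then c2 + ((dj:ℝ) - 1) * (c3 * 3) else 0) := by
      intro u
      by_cases hu : u = j
      · have hv : ∀ v : V,
            ((if u = j ∧ v = i then x else 0) +
            ((if u = j ∧ (v ≠ i ∧ G.Adj j v) then c1 else 0) +
            ((if (u ≠ j ∧ G.Adj i u) ∧ v = i then c2 else 0) +
            (if (u ≠ j ∧ G.Adj i u) ∧ (v ≠ i ∧ G.Adj j v) then c3 * 3 else 0))))
            = (if v = i then x else 0) + (if v ≠ i ∧ G.Adj j v then c1 else 0) := by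
          intro v; simp [hu]
        rw [Finset.sum_congr rfl fun v _ => hv v, Finset.sum_add_distrib, hsumI, hsumB]
        simp [hu]
      · by_cases hadj : G.Adj i u
        · have hv : ∀ v : V,
              ((if u = j ∧ v = i then x else 0) +
              ((if u = j ∧ (v ≠ i ∧ G.Adj j v) then c1 else 0) +
              ((if (u ≠ j ∧ G.Adj i u) ∧ v = i then c2 else 0) +
              (if (u ≠ j ∧ G.Adj i u) ∧ (v ≠ i ∧ G.Adj j v) then c3 * 3 else 0))))
              = (if v = i then c2 else 0) + (if v ≠ i ∧ G.Adj j v then c3 * 3 else 0) := by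
            intro v; simp [hu, hadj]
          rw [Finset.sum_congr rfl fun v _ => hv v, Finset.sum_add_distrib, hsumI, hsumB]
          simp [hu, hadj]
        · have hv : ∀ v : V,
              ((if u = j ∧ v = i then x else 0) +
              ((if u = j ∧ (v ≠ i ∧ G.Adj j v) then c1 else 0) +
              ((if (u ≠ j ∧ G.Adj i u) ∧ v = i then c2 else 0) +
              (if (u ≠ j ∧ G.Adj i u) ∧ (v ≠ i ∧ G.Adj j v) then c3 * 3 else 0))))
              = 0 := by
            intro v; simp [hu, hadj]
          rw [Finset.sum_congr rfl fun v _ => hv v]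
          simp [hu, hadj]
    rw [Finset.sum_congr rfl fun u _ => hinner u, Finset.sum_add_distrib, hsumJ, hsumA]
    have e4 : ((di:ℝ) - 1) * (c2 + ((dj:ℝ) - 1) * (c3 * 3))
        = (b - x) + 3 * (((di:ℝ) - 1) * ((dj:ℝ) - 1) * c3) := by
      rw [← L2]; ring
    rw [e4, L3]
    linarith [L1, hxt]
  -- conclude
  have hmem : (∑ u, ∑ v, Γ u v * (G.dist u v : ℝ)) ∈
      { c : ℝ | ∃ Γ' : V → V → ℝ, IsCoupling G i j Γ' ∧
        c = ∑ u, ∑ v, Γ' u v * (G.dist u v : ℝ) } :=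
    ⟨Γ, ⟨hnn, hrow, hcol⟩, rfl⟩
  have hbdd : BddBelow { c : ℝ | ∃ Γ' : V → V → ℝ, IsCoupling G i j Γ' ∧
      c = ∑ u, ∑ v, Γ' u v * (G.dist u v : ℝ) } := by
    refine ⟨0, ?_⟩
    rintro c ⟨Γ', hΓ', rfl⟩
    exact Finset.sum_nonneg fun u _ => Finset.sum_nonneg fun v _ =>
      mul_nonneg (hΓ'.1 u v) (Nat.cast_nonneg _)
  have hW : wassersteinW1 G i j ≤ 1 + 2 * t :=
    le_trans (csInf_le hbdd hmem) hcost
  show 1 - wassersteinW1 G i j ≥ -2 * t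
  linarith
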